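/- For every integer d ≥ 1, all m, l ∈ ℤ^d and every x ∈ ℝ^d, one has B(s_m − c_l)(x) + B(c_m − s_l)(x) − B(s_m)(x) − B(s_l)(x) − B(c_m)(x) − B(c_l)(x) = 2⟨m,l⟩·sin⟨x, m+l⟩, where ⟨m,l⟩ = Σ_{j=1}^d m_j l_j. In particular, if ⟨m,l⟩ ≠ 0 then sin⟨·, m+l⟩ is a scalar multiple of this combination of values of B on elements of the span of {s_m, s_l, c_m, c_l}. -/

import Mathlib

open Real MeasureTheory

/-- ⟨x, m⟩ = ∑ x_j m_j for x ∈ ℝ^d, m ∈ ℤ^d. -/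
noncomputable def ip (d : ℕ) (x : Fin d → ℝ) (m : Fin d → ℤ) : ℝ :=
  ∑ j, x j * (m j : ℝ)

/-- Integer inner product on ℤ^d. -/
def ipZ (d : ℕ) (m l : Fin d → ℤ) : ℤ := ∑ j, m j * l j

/-- c_m(x) = cos⟨x,m⟩. -/
noncomputable def cmap (d : ℕ) (m : Fin d → ℤ) : (Fin d → ℝ) → ℝ :=
  fun x => Real.cos (ip d x m)

/-- s_m(x) = sin⟨x,m⟩. -/
noncomputable def smap (d : ℕ) (m : Fin d → ℤ) : (Fin d → ℝ) → ℝ :=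
  fun x => Real.sin (ip d x m)

/-- B(φ)(x) = ∑_j (∂_{x_j} φ(x))². -/
noncomputable def Bop (d : ℕ) (φ : (Fin d → ℝ) → ℝ) : (Fin d → ℝ) → ℝ :=
  fun x => ∑ j, (fderiv ℝ φ x (Pi.single j 1)) ^ 2

/-- Functions representable as θ₀ − ∑_{j=1}^n B(θ_j) with θ's in H, n ≥ 1. -/
noncomputable def BRep (d : ℕ) (H : Set ((Fin d → ℝ) → ℝ)) : Set ((Fin d → ℝ) → ℝ) :=
  { f | ∃ n : ℕ, 1 ≤ n ∧ ∃ θ₀ ∈ H, ∃ θ : Fin n → (Fin d → ℝ) → ℝ,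
      (∀ j, θ j ∈ H) ∧ f = θ₀ - ∑ j, Bop d (θ j) }

/-- F(H): f such that both f and −f are representable. -/
noncomputable def Fop (d : ℕ) (H : Set ((Fin d → ℝ) → ℝ)) : Set ((Fin d → ℝ) → ℝ) :=
  { f | f ∈ BRep d H ∧ -f ∈ BRep d H }

/-- H(I): span of {1} ∪ {c_k, s_k : k ∈ I}. -/
noncomputable def H0 (d : ℕ) (I : Finset (Fin d → ℤ)) : Set ((Fin d → ℝ) → ℝ) :=
  ↑(Submodule.span ℝ
      ({fun _ => (1:ℝ)} ∪ ⋃ k ∈ (I : Set (Fin d → ℤ)), {cmap d k, smap d k}))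

noncomputable def HSeq (d : ℕ) (I : Finset (Fin d → ℤ)) : ℕ → Set ((Fin d → ℝ) → ℝ)
  | 0 => H0 d I
  | j + 1 => Fop d (HSeq d I j)

/-- H_∞(I) = ⋃_j H_j(I). -/
noncomputable def Hinf (d : ℕ) (I : Finset (Fin d → ℤ)) : Set ((Fin d → ℝ) → ℝ) :=
  ⋃ j, HSeq d I j

/-- I generates ℤ^d over ℤ. -/
def IsGenerator (d : ℕ) (I : Finset (Fin d → ℤ)) : Prop :=
  ∀ n : Fin d → ℤ, ∃ a : (Fin d → ℤ) → ℤ, n = ∑ k ∈ I, a k • k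

/-- Connectedness condition of Proposition 2.5. -/
def ConnectedSet (d : ℕ) (I : Finset (Fin d → ℤ)) : Prop :=
  ∀ l ∈ I, ∀ m ∈ I, ∃ k : ℕ, ∃ n : Fin (k + 1) → (Fin d → ℤ),
    (∀ j, n j ∈ I) ∧ ipZ d l (n 0) ≠ 0 ∧
    (∀ j : Fin k, ipZ d (n j.castSucc) (n j.succ) ≠ 0) ∧
    ipZ d (n (Fin.last k)) m ≠ 0

/-- (2πℤ^d)-periodicity for real-valued functions. -/
def Periodic2pi (d : ℕ) (f : (Fin d → ℝ) → ℝ) : Prop :=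
  ∀ (x : Fin d → ℝ) (k : Fin d → ℤ), f (x + fun j => 2 * Real.pi * (k j : ℝ)) = f x
noncomputable def ipL (d : ℕ) (m : Fin d → ℤ) : (Fin d → ℝ) →L[ℝ] ℝ :=
  ∑ j, (m j : ℝ) • ContinuousLinearMap.proj j

lemma ipL_apply (d : ℕ) (m : Fin d → ℤ) (v : Fin d → ℝ) : ipL d m v = ip d v m := by
  simp [ipL, ip, ContinuousLinearMap.sum_apply, mul_comm]

lemma ipL_single (d : ℕ) (m : Fin d → ℤ) (j : Fin d) :
    ipL d m (Pi.single j 1) = (m j : ℝ) := by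
  rw [ipL_apply]
  simp [ip, Pi.single_apply]

lemma hasFDerivAt_ip (d : ℕ) (m : Fin d → ℤ) (x : Fin d → ℝ) :
    HasFDerivAt (fun y => ip d y m) (ipL d m) x := by
  have : (fun y => ip d y m) = ⇑(ipL d m) := by
    funext v; rw [ipL_apply]
  rw [this]
  exact (ipL d m).hasFDerivAt

lemma hasFDerivAt_smap (d : ℕ) (m : Fin d → ℤ) (x : Fin d → ℝ) :
    HasFDerivAt (smap d m) (Real.cos (ip d x m) • ipL d m) x :=
  (hasFDerivAt_ip d m x).sin

lemma hasFDerivAt_cmap (d : ℕ) (m : Fin d → ℤ) (x : Fin d → ℝ) :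
    HasFDerivAt (cmap d m) (-Real.sin (ip d x m) • ipL d m) x :=
  (hasFDerivAt_ip d m x).cos

lemma fderiv_smap (d : ℕ) (m : Fin d → ℤ) (x : Fin d → ℝ) (j : Fin d) :
    fderiv ℝ (smap d m) x (Pi.single j 1) = Real.cos (ip d x m) * (m j : ℝ) := by
  rw [(hasFDerivAt_smap d m x).fderiv]
  simp [ipL_single]

lemma fderiv_cmap (d : ℕ) (m : Fin d → ℤ) (x : Fin d → ℝ) (j : Fin d) :
    fderiv ℝ (cmap d m) x (Pi.single j 1) = -Real.sin (ip d x m) * (m j : ℝ) := by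
  rw [(hasFDerivAt_cmap d m x).fderiv]
  simp [ipL_single]

lemma fderiv_sc (d : ℕ) (m l : Fin d → ℤ) (x : Fin d → ℝ) (j : Fin d) :
    fderiv ℝ (smap d m - cmap d l) x (Pi.single j 1)
      = Real.cos (ip d x m) * (m j : ℝ) + Real.sin (ip d x l) * (l j : ℝ) := by
  rw [show smap d m - cmap d l = (fun y => smap d m y - cmap d l y) from rfl,
    HasFDerivAt.fderiv (f := fun y => smap d m y - cmap d l y)
      ((hasFDerivAt_smap d m x).sub (hasFDerivAt_cmap d l x))]
  simp [ipL_single]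

lemma fderiv_cs (d : ℕ) (m l : Fin d → ℤ) (x : Fin d → ℝ) (j : Fin d) :
    fderiv ℝ (cmap d m - smap d l) x (Pi.single j 1)
      = -Real.sin (ip d x m) * (m j : ℝ) - Real.cos (ip d x l) * (l j : ℝ) := by
  rw [show cmap d m - smap d l = (fun y => cmap d m y - smap d l y) from rfl,
    HasFDerivAt.fderiv (f := fun y => cmap d m y - smap d l y)
      ((hasFDerivAt_cmap d m x).sub (hasFDerivAt_smap d l x))]
  simp [ipL_single]

lemma ip_add (d : ℕ) (m l : Fin d → ℤ) (x : Fin d → ℝ) :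
    ip d x (m + l) = ip d x m + ip d x l := by
  simp [ip, mul_add, Finset.sum_add_distrib]

/-- B(s_m−c_l) + B(c_m−s_l) − B(s_m) − B(s_l) − B(c_m) − B(c_l)
= 2⟨m,l⟩ sin⟨·, m+l⟩; hence for ⟨m,l⟩ ≠ 0, sin⟨·,m+l⟩ is a scalar multiple of
this combination. -/
theorem stmt3 (d : ℕ) (hd : 1 ≤ d) (m l : Fin d → ℤ) :
    (∀ x : Fin d → ℝ,
      Bop d (smap d m - cmap d l) x + Bop d (cmap d m - smap d l) x
        - Bop d (smap d m) x - Bop d (smap d l) x - Bop d (cmap d m) x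
        - Bop d (cmap d l) x
        = 2 * (ipZ d m l : ℝ) * Real.sin (ip d x (m + l))) ∧
    ((ipZ d m l : ℤ) ≠ 0 → ∃ c : ℝ,
      smap d (m + l)
        = c • (Bop d (smap d m - cmap d l) + Bop d (cmap d m - smap d l)
            - Bop d (smap d m) - Bop d (smap d l) - Bop d (cmap d m)
            - Bop d (cmap d l))) := by
  have key : ∀ x : Fin d → ℝ,
      Bop d (smap d m - cmap d l) x + Bop d (cmap d m - smap d l) x
        - Bop d (smap d m) x - Bop d (smap d l) x - Bop d (cmap d m) x
        - Bop d (cmap d l) x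
        = 2 * (ipZ d m l : ℝ) * Real.sin (ip d x (m + l)) := by
    intro x
    simp only [Bop, fderiv_smap, fderiv_cmap, fderiv_sc, fderiv_cs]
    rw [ip_add, Real.sin_add, ipZ]
    push_cast
    rw [← Finset.sum_add_distrib, ← Finset.sum_sub_distrib, ← Finset.sum_sub_distrib,
      ← Finset.sum_sub_distrib, ← Finset.sum_sub_distrib, Finset.mul_sum, Finset.sum_mul]
    exact Finset.sum_congr rfl fun j _ => by ring
  refine ⟨key, fun h => ⟨1 / (2 * (ipZ d m l : ℝ)), ?_⟩⟩
  have h2 : (2 : ℝ) * (ipZ d m l : ℝ) ≠ 0 := by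
    have : (ipZ d m l : ℝ) ≠ 0 := Int.cast_ne_zero.mpr h
    positivity
  funext x
  simp only [Pi.smul_apply, Pi.sub_apply, Pi.add_apply, smul_eq_mul, smap]
  rw [show Bop d (smap d m - cmap d l) x + Bop d (cmap d m - smap d l) x
        - Bop d (smap d m) x - Bop d (smap d l) x - Bop d (cmap d m) x
        - Bop d (cmap d l) x
        = 2 * (ipZ d m l : ℝ) * Real.sin (ip d x (m + l)) from key x]
  field_simp
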